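/- Let f : ℝⁿ → ℝⁿ be continuously differentiable with Jacobian Df(x), let λ ≥ 0, ε ≥ 0, and let P be a real symmetric n×n matrix such that Df(x)ᵀP + P·Df(x) ⪯ −2λP − εI for all x ∈ ℝⁿ. Then for all x, y ∈ ℝⁿ: (x−y)ᵀP(f(x)−f(y)) + (f(x)−f(y))ᵀP(x−y) ≤ −2λ·(x−y)ᵀP(x−y) − ε·|x−y|², where |·| denotes the Euclidean norm. -/

import Mathlib

open Matrix

/-- `M ⪯ N` iff `N - M` is positive semidefinite. -/
def matLE {m : Type*} [Fintype m] (M N : Matrix m m ℝ) : Prop := (N - M).PosSemidef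

/-- A real symmetric matrix has inertia `p`: exactly `p` negative eigenvalues,
`card m − p` positive eigenvalues, and no zero eigenvalues, counted with multiplicity
(as roots of the characteristic polynomial). -/
def hasInertia {m : Type*} [Fintype m] [DecidableEq m]
    (P : Matrix m m ℝ) (p : ℕ) : Prop :=
  Multiset.countP (fun μ : ℝ => μ < 0) P.charpoly.roots = p ∧
  Multiset.countP (fun μ : ℝ => 0 < μ) P.charpoly.roots = Fintype.card m - p ∧
  (0 : ℝ) ∉ P.charpoly.roots

/-- Number of complex eigenvalues (with algebraic multiplicity) of a real matrix
with strictly positive real part. -/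
noncomputable def posReCount {m : Type*} [Fintype m] [DecidableEq m]
    (A : Matrix m m ℝ) : ℕ :=
  Multiset.countP (fun μ : ℂ => 0 < μ.re) (A.map Complex.ofReal).charpoly.roots

/-- Number of complex eigenvalues (with algebraic multiplicity) of a real matrix
with strictly negative real part. -/
noncomputable def negReCount {m : Type*} [Fintype m] [DecidableEq m]
    (A : Matrix m m ℝ) : ℕ :=
  Multiset.countP (fun μ : ℂ => μ.re < 0) (A.map Complex.ofReal).charpoly.roots

/-- The quadratic form `xᵀ P x`. -/
def quadForm {m : Type*} [Fintype m] (P : Matrix m m ℝ) (x : m → ℝ) : ℝ :=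
  x ⬝ᵥ P.mulVec x

/-- Euclidean norm on `m → ℝ`. -/
noncomputable def enorm {m : Type*} [Fintype m] (x : m → ℝ) : ℝ :=
  Real.sqrt (x ⬝ᵥ x)

/-- `J` is the Jacobian of `f`. -/
def IsJacobianOf {n : ℕ} (J : (Fin n → ℝ) → Matrix (Fin n) (Fin n) ℝ)
    (f : (Fin n → ℝ) → (Fin n → ℝ)) : Prop :=
  ∀ x, HasFDerivAt f (LinearMap.toContinuousLinearMap ((J x).mulVecLin)) x

/-- the pointwise differential LMI implies the incremental inequality. -/
theorem differential_lmi_implies_incremental {n : ℕ}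
    (f : (Fin n → ℝ) → (Fin n → ℝ)) (J : (Fin n → ℝ) → Matrix (Fin n) (Fin n) ℝ)
    (hf : ContDiff ℝ 1 f) (hJ : IsJacobianOf J f)
    (P : Matrix (Fin n) (Fin n) ℝ) (hPsymm : P.IsSymm)
    (lam eps : ℝ) (hlam : 0 ≤ lam) (heps : 0 ≤ eps)
    (hLMI : ∀ x : Fin n → ℝ, matLE ((J x)ᵀ * P + P * J x)
      (-((2 * lam) • P) - eps • (1 : Matrix (Fin n) (Fin n) ℝ))) :
    ∀ x y : Fin n → ℝ,
      (x - y) ⬝ᵥ P.mulVec (f x - f y) + (f x - f y) ⬝ᵥ P.mulVec (x - y)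
        ≤ -(2 * lam) * ((x - y) ⬝ᵥ P.mulVec (x - y)) - eps * ((x - y) ⬝ᵥ (x - y)) := by
  intro x y
  set v : Fin n → ℝ := x - y with hv
  set C : ℝ := -(2 * lam) * (v ⬝ᵥ P.mulVec v) - eps * (v ⬝ᵥ v) with hC
  -- the linear functional u ↦ vᵀPu + uᵀPv
  set L : (Fin n → ℝ) →ₗ[ℝ] ℝ :=
    { toFun := fun u => v ⬝ᵥ P.mulVec u + u ⬝ᵥ P.mulVec v
      map_add' := by
        intro a b
        simp [Matrix.mulVec_add, dotProduct_add, add_dotProduct]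
        ring
      map_smul' := by
        intro c a
        simp [Matrix.mulVec_smul, dotProduct_smul, smul_dotProduct,
          smul_eq_mul]
        ring } with hL
  set φ : ℝ → (Fin n → ℝ) := fun t => y + t • v with hφ
  set g : ℝ → ℝ := fun t => L (f (φ t)) - C * t with hg
  have hderiv : ∀ t : ℝ, HasDerivAt g (L ((J (φ t)).mulVec v) - C) t := by
    intro t
    have hφ' : HasDerivAt φ v t := by
      have h1 : HasDerivAt (fun s : ℝ => s • v) ((1 : ℝ) • v) t :=
        (hasDerivAt_id t).smul_const v
      have h2 : HasDerivAt (fun s : ℝ => s • v) v t := by simpa using h1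
      exact h2.const_add y
    have hfφ : HasDerivAt (fun t => f (φ t)) ((J (φ t)).mulVec v) t := by
      have := (hJ (φ t)).comp_hasDerivAt t hφ'
      exact this
    have hLf : HasDerivAt (fun t => L (f (φ t))) (L ((J (φ t)).mulVec v)) t := by
      have := (LinearMap.toContinuousLinearMap L).hasFDerivAt.comp_hasDerivAt t hfφ
      exact this
    have hCt : HasDerivAt (fun t : ℝ => C * t) C t := by
      simpa using (hasDerivAt_id t).const_mul C
    exact hLf.sub hCt
  have hdnonpos : ∀ t : ℝ, L ((J (φ t)).mulVec v) - C ≤ 0 := by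
    intro t
    have hpsd := (Matrix.posSemidef_iff_dotProduct_mulVec.mp (hLMI (φ t))).2 v
    have hexp : v ⬝ᵥ (-((2 * lam) • P) - eps • (1 : Matrix (Fin n) (Fin n) ℝ)
        - ((J (φ t))ᵀ * P + P * J (φ t))).mulVec v
        = C - L ((J (φ t)).mulVec v) := by
      have e1 : v ⬝ᵥ (P * J (φ t)).mulVec v = v ⬝ᵥ P.mulVec ((J (φ t)).mulVec v) := by
        rw [← Matrix.mulVec_mulVec]
      have e2 : v ⬝ᵥ ((J (φ t))ᵀ * P).mulVec v = ((J (φ t)).mulVec v) ⬝ᵥ P.mulVec v := by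
        rw [← Matrix.mulVec_mulVec, Matrix.dotProduct_mulVec, Matrix.vecMul_transpose]
      simp only [Matrix.sub_mulVec, Matrix.add_mulVec, Matrix.neg_mulVec,
        Matrix.smul_mulVec, Matrix.one_mulVec, dotProduct_sub,
        dotProduct_add, dotProduct_neg, dotProduct_smul,
        smul_eq_mul, hC, hL]
      rw [e1, e2]
      simp only [LinearMap.coe_mk, AddHom.coe_mk]
      ring
    have : (0:ℝ) ≤ C - L ((J (φ t)).mulVec v) := by
      rw [← hexp]; simpa using hpsd
    linarith
  have hanti : Antitone g :=
    antitone_of_deriv_nonpos (fun t => (hderiv t).differentiableAt)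
      (fun t => by rw [(hderiv t).deriv]; exact hdnonpos t)
  have hkey : g 1 ≤ g 0 := hanti (by norm_num)
  have hφ1 : φ 1 = x := by simp [hφ, hv]
  have hφ0 : φ 0 = y := by simp [hφ]
  rw [hg] at hkey
  simp only [hφ1, hφ0, mul_one, mul_zero, sub_zero] at hkey
  have hL1 : L (f x) - L (f y) = v ⬝ᵥ P.mulVec (f x - f y) + (f x - f y) ⬝ᵥ P.mulVec v := by
    simp only [hL, LinearMap.coe_mk, AddHom.coe_mk, Matrix.mulVec_sub,
      dotProduct_sub, sub_dotProduct]
    ring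
  rw [hv] at *
  linarith [hL1, hkey]
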